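/- With X a topological space, B a collection of open sets satisfying (B_I) and (B_II), and U the induced uniformity of finite covers, the topology on X induced by U is coarser than the original topology; the two topologies coincide if and only if B satisfies: for every x ∈ X and every neighborhood Y of x, there exists a finite cover C of X by elements of B such that the union of elements of C containing x is contained in Y. -/

import Mathlib

/-- `C` is a finite cover of `X` by elements of `B`. -/
def IsCover {X : Type*} (B : Set (Set X)) (C : Finset (Set X)) : Prop :=
  ↑C ⊆ B ∧ ⋃₀ (↑C : Set (Set X)) = Set.univ

/-- `V(C)(x)`: the union of the elements of the cover `C` containing `x`. -/
def coverNbhd {X : Type*} (C : Finset (Set X)) (x : X) : Set X :=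
  ⋃₀ {Y | Y ∈ C ∧ x ∈ Y}

/-- The neighborhood filter of `x` for the uniformity of finite covers: generated by
the sets `V(C)(x)` as `C` runs over the finite covers of `X` by elements of `B`. -/
def coverNhds {X : Type*} (B : Set (Set X)) (x : X) : Filter X :=
  Filter.generate {S | ∃ C : Finset (Set X), IsCover B C ∧ S = coverNbhd C x}

lemma mem_coverNbhd_self {X : Type*} {B : Set (Set X)} {C : Finset (Set X)}
    (hC : IsCover B C) (x : X) : x ∈ coverNbhd C x := by
  have : x ∈ ⋃₀ (↑C : Set (Set X)) := hC.2 ▸ Set.mem_univ x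
  rcases this with ⟨Y, hY, hxY⟩
  exact ⟨Y, ⟨hY, hxY⟩, hxY⟩

lemma inter_cover {X : Type*} {B : Set (Set X)}
    (hBI : ∀ S : Finset (Set X), S.Nonempty → ↑S ⊆ B →
      (⋂₀ (↑S : Set (Set X))).Nonempty → ⋂₀ (↑S : Set (Set X)) ∈ B)
    {C₁ C₂ : Finset (Set X)} (h₁ : IsCover B C₁) (h₂ : IsCover B C₂) :
    ∃ C : Finset (Set X), IsCover B C ∧
      ∀ x : X, coverNbhd C x ⊆ coverNbhd C₁ x ∩ coverNbhd C₂ x := by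
  classical
  refine ⟨((C₁ ×ˢ C₂).image fun p => p.1 ∩ p.2).filter (fun Y => Y.Nonempty), ⟨?_, ?_⟩, ?_⟩
  · intro Y hY
    simp only [Finset.coe_filter, Set.mem_setOf_eq, Finset.mem_image, Finset.mem_product] at hY
    obtain ⟨⟨⟨Y₁, Y₂⟩, ⟨hY₁, hY₂⟩, rfl⟩, hne⟩ := hY
    have := hBI {Y₁, Y₂} (by simp) ?_ ?_
    · simpa using this
    · intro Z hZ
      simp only [Finset.coe_insert, Finset.coe_singleton, Set.mem_insert_iff,
        Set.mem_singleton_iff] at hZ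
      rcases hZ with rfl | rfl
      · exact h₁.1 hY₁
      · exact h₂.1 hY₂
    · simpa using hne
  · apply Set.eq_univ_of_forall
    intro z
    have hz₁ : z ∈ ⋃₀ (↑C₁ : Set (Set X)) := h₁.2 ▸ Set.mem_univ z
    have hz₂ : z ∈ ⋃₀ (↑C₂ : Set (Set X)) := h₂.2 ▸ Set.mem_univ z
    obtain ⟨Y₁, hY₁, hzY₁⟩ := hz₁
    obtain ⟨Y₂, hY₂, hzY₂⟩ := hz₂
    refine ⟨Y₁ ∩ Y₂, ?_, ⟨hzY₁, hzY₂⟩⟩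
    simp only [Finset.coe_filter, Set.mem_setOf_eq, Finset.mem_image, Finset.mem_product]
    exact ⟨⟨⟨Y₁, Y₂⟩, ⟨hY₁, hY₂⟩, rfl⟩, ⟨z, hzY₁, hzY₂⟩⟩
  · intro x y hy
    obtain ⟨Y, ⟨hYC, hxY⟩, hyY⟩ := hy
    simp only [Finset.mem_filter, Finset.mem_image, Finset.mem_product] at hYC
    obtain ⟨⟨⟨Y₁, Y₂⟩, ⟨hY₁, hY₂⟩, rfl⟩, _⟩ := hYC
    exact ⟨⟨Y₁, ⟨hY₁, hxY.1⟩, hyY.1⟩, ⟨Y₂, ⟨hY₂, hxY.2⟩, hyY.2⟩⟩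

lemma mem_coverNhds_iff {X : Type*} {B : Set (Set X)}
    (hBI : ∀ S : Finset (Set X), S.Nonempty → ↑S ⊆ B →
      (⋂₀ (↑S : Set (Set X))).Nonempty → ⋂₀ (↑S : Set (Set X)) ∈ B)
    (hcov : ∃ C : Finset (Set X), IsCover B C) (x : X) (s : Set X) :
    s ∈ coverNhds B x ↔ ∃ C : Finset (Set X), IsCover B C ∧ coverNbhd C x ⊆ s := by
  rw [coverNhds, Filter.mem_generate_iff]
  constructor
  · rintro ⟨T, hTsub, hTfin, hTs⟩
    have key : ∀ T : Set (Set X), T.Finite →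
        T ⊆ {S | ∃ C : Finset (Set X), IsCover B C ∧ S = coverNbhd C x} →
        ∃ C : Finset (Set X), IsCover B C ∧ coverNbhd C x ⊆ ⋂₀ T := by
      intro T hTfin
      refine Set.Finite.induction_on (motive := fun T _ => T ⊆ {S | ∃ C : Finset (Set X), IsCover B C ∧ S = coverNbhd C x} →
          ∃ C : Finset (Set X), IsCover B C ∧ coverNbhd C x ⊆ ⋂₀ T) T hTfin ?_ ?_
      · intro _; obtain ⟨C, hC⟩ := hcov; exact ⟨C, hC, by simp⟩
      · intro S T _ _ ih hsub
        obtain ⟨C₀, hC₀, hC₀sub⟩ := ih (fun Z hZ => hsub (Set.mem_insert_of_mem _ hZ))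
        obtain ⟨C₁, hC₁, rfl⟩ := hsub (Set.mem_insert _ _)
        obtain ⟨C, hC, hsub'⟩ := inter_cover hBI hC₁ hC₀
        refine ⟨C, hC, ?_⟩
        rw [Set.sInter_insert]
        intro y hy
        exact ⟨(hsub' x hy).1, hC₀sub (hsub' x hy).2⟩
    obtain ⟨C, hC, hCsub⟩ := key T hTfin hTsub
    exact ⟨C, hC, hCsub.trans hTs⟩
  · rintro ⟨C, hC, hCs⟩
    exact ⟨{coverNbhd C x}, by simpa using ⟨C, hC, rfl⟩, Set.finite_singleton _, by simpa using hCs⟩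

theorem stmt7 {X : Type*} (t : TopologicalSpace X) (B : Set (Set X))
    (hBopen : ∀ Y ∈ B, @IsOpen X t Y)
    (hBI : ∀ S : Finset (Set X), S.Nonempty → ↑S ⊆ B →
      (⋂₀ (↑S : Set (Set X))).Nonempty → ⋂₀ (↑S : Set (Set X)) ∈ B)
    (hBII : ∀ C : Finset (Set X), IsCover B C → ∃ C' : Finset (Set X), IsCover B C' ∧
      ∀ x : X, ∃ Z ∈ C, coverNbhd C' x ⊆ Z)
    (hcov : ∃ C : Finset (Set X), IsCover B C) :
    t ≤ TopologicalSpace.mkOfNhds (coverNhds B) ∧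
    (TopologicalSpace.mkOfNhds (coverNhds B) = t ↔
      ∀ x : X, ∀ Y ∈ @nhds X t x, ∃ C : Finset (Set X), IsCover B C ∧ coverNbhd C x ⊆ Y) := by
  -- pure ≤ coverNhds
  have hpure : pure ≤ coverNhds B := by
    intro x s hs
    rw [mem_coverNhds_iff hBI hcov] at hs
    obtain ⟨C, hC, hCs⟩ := hs
    exact hCs (mem_coverNbhd_self hC x)
  -- the key interior condition
  have hkey : ∀ x : X, ∀ s ∈ coverNhds B x, ∀ᶠ y in coverNhds B x, s ∈ coverNhds B y := by
    intro x s hs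
    rw [mem_coverNhds_iff hBI hcov] at hs
    obtain ⟨C, hC, hCs⟩ := hs
    obtain ⟨C', hC', hC'ref⟩ := hBII C hC
    have hmem : coverNbhd C' x ∈ coverNhds B x := by
      rw [mem_coverNhds_iff hBI hcov]; exact ⟨C', hC', subset_rfl⟩
    refine Filter.mem_of_superset hmem ?_
    intro y hy
    show s ∈ coverNhds B y
    rw [mem_coverNhds_iff hBI hcov]
    refine ⟨C', hC', ?_⟩
    obtain ⟨Z, hZC, hZsub⟩ := hC'ref y
    -- x ∈ coverNbhd C' y
    obtain ⟨Y, ⟨hYC', hxY⟩, hyY⟩ := hy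
    have hxCy : x ∈ coverNbhd C' y := ⟨Y, ⟨hYC', hyY⟩, hxY⟩
    have hxZ : x ∈ Z := hZsub hxCy
    refine hZsub.trans (Set.Subset.trans ?_ hCs)
    exact Set.subset_sUnion_of_mem ⟨hZC, hxZ⟩
  have hnhds : ∀ x : X, @nhds X (TopologicalSpace.mkOfNhds (coverNhds B)) x = coverNhds B x :=
    fun x => TopologicalSpace.nhds_mkOfNhds _ x hpure hkey
  have hle : t ≤ TopologicalSpace.mkOfNhds (coverNhds B) := by
    rw [le_iff_nhds]
    intro x
    rw [hnhds x, coverNhds]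
    rw [Filter.le_generate_iff]
    rintro S ⟨C, hC, rfl⟩
    -- coverNbhd C x is open in t and contains x
    have hopen : @IsOpen X t (coverNbhd C x) := by
      apply isOpen_sUnion
      intro Y hY
      exact hBopen Y (hC.1 hY.1)
    exact hopen.mem_nhds (mem_coverNbhd_self hC x)
  refine ⟨hle, ?_⟩
  constructor
  · intro heq x Y hY
    rw [← (mem_coverNhds_iff hBI hcov x Y), ← hnhds x, heq]
    exact hY
  · intro hBIII
    apply le_antisymm
    · rw [le_iff_nhds]
      intro x
      rw [hnhds x]
      intro Y hY
      rw [mem_coverNhds_iff hBI hcov]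
      exact hBIII x Y hY
    · exact hle
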